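/- Two purely asynchronous cellular automata C = (R, N, Q, δ) and G = (R, N, Q, γ) with the same neighborhood are inverse to each other if and only if for every pair of configurations c, c' ∈ Q^R whose difference set satisfies 0 ∈ D_{c,c'} ⊆ {0} ∪ N, we have c' = Δ_{D_{c,c'}}(c) ⇔ c = Γ_{D_{c,c'}}(c'). -/

import Mathlib

noncomputable section
open scoped Classical

/-- The set of cells of a `d`-dimensional cellular automaton: `ℤ^d`. -/
abbrev Cell (d : ℕ) := Fin d → ℤ

/-- The global transition function `Δ_A` with active cell set `A`:
an active cell applies the local rule `δ` to the local configuration it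
observes in its neighborhood `N`; a passive cell keeps its state. -/
def step {d : ℕ} {Q : Type*} (N : Finset (Cell d)) (δ : (↥N → Q) → Q)
    (A : Set (Cell d)) (c : Cell d → Q) : Cell d → Q :=
  fun i => if i ∈ A then δ (fun n => c (i + n.1)) else c i

/-- The difference set `D_{c,c'}` of two global configurations. -/
def diffSet {d : ℕ} {Q : Type*} (c c' : Cell d → Q) : Set (Cell d) :=
  {i | c i ≠ c' i}

/-- Two purely asynchronous CAs are inverse to each other. -/
def PureInverse {d : ℕ} {Q : Type*} (N M : Finset (Cell d))
    (δ : (↥N → Q) → Q) (γ : (↥M → Q) → Q) : Prop :=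
  ∀ c c' : Cell d → Q,
    (∃ A : Set (Cell d), c' = step N δ A c) ↔ (∃ A : Set (Cell d), c = step M γ A c')

/-- Two fully asynchronous CAs are inverse to each other. -/
def FullInverse {d : ℕ} {Q : Type*} (N M : Finset (Cell d))
    (δ : (↥N → Q) → Q) (γ : (↥M → Q) → Q) : Prop :=
  ∀ c c' : Cell d → Q,
    (∃ a : Cell d, c' = step N δ {a} c) ↔ (∃ a : Cell d, c = step M γ {a} c')

lemma diffSet_comm {d : ℕ} {Q : Type*} (c c' : Cell d → Q) :
    diffSet c c' = diffSet c' c := by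
  ext i; exact ne_comm

lemma step_normalize {d : ℕ} {Q : Type*} (N : Finset (Cell d)) (δ : (↥N → Q) → Q)
    (A : Set (Cell d)) (c c' : Cell d → Q) (h : c' = step N δ A c) :
    c' = step N δ (diffSet c c') c := by
  funext i
  by_cases hi : i ∈ diffSet c c'
  · have hiA : i ∈ A := by
      by_contra hA
      have := congrFun h i
      simp only [step, hA, if_false] at this
      exact hi this.symm
    have hh := congrFun h i
    simp only [step, hiA, if_true] at hh
    simpa only [step, hi, if_true] using hh
  · simp only [step, hi, if_false]
    exact (not_not.mp hi).symm

lemma local_stepA {d : ℕ} {Q : Type*} (N : Finset (Cell d)) (δ γ : (↥N → Q) → Q)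
    (H : ∀ c c' : Cell d → Q,
        (0 : Cell d) ∈ diffSet c c' → diffSet c c' ⊆ {0} ∪ (↑N : Set (Cell d)) →
        (c' = step N δ (diffSet c c') c ↔ c = step N γ (diffSet c c') c'))
    (c c' : Cell d → Q) (h : c' = step N δ (diffSet c c') c) :
    c = step N γ (diffSet c c') c' := by
  funext i
  by_cases hi : i ∈ diffSet c c'
  swap
  · simp only [step, hi, if_false]
    exact not_not.mp hi
  · simp only [step, hi, if_true]
    set S : Set (Cell d) := {0} ∪ (↑N : Set (Cell d)) with hS
    set b : Cell d → Q := fun j => c (i + j) with hb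
    set b' : Cell d → Q := fun j => if j ∈ S then c' (i + j) else c (i + j) with hb'
    have hdiff : ∀ j, j ∈ diffSet b b' ↔ (j ∈ S ∧ c (i + j) ≠ c' (i + j)) := by
      intro j
      by_cases hj : j ∈ S <;> simp [diffSet, hb, hb', hj]
    have h0 : (0 : Cell d) ∈ diffSet b b' := by
      rw [hdiff]
      exact ⟨Or.inl rfl, by simpa [diffSet] using hi⟩
    have hsub : diffSet b b' ⊆ S := fun j hj => ((hdiff j).mp hj).1
    have hmem : ∀ j ∈ diffSet b b', i + j ∈ diffSet c c' := fun j hj => ((hdiff j).mp hj).2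
    have hstep : b' = step N δ (diffSet b b') b := by
      funext j
      by_cases hj : j ∈ diffSet b b'
      · simp only [step, hj, if_true]
        have h1 : b' j = c' (i + j) := by simp [hb', hsub hj]
        rw [h1]
        have h2 := congrFun h (i + j)
        simp only [step, hmem j hj, if_true] at h2
        rw [h2]
        congr 1
        funext n
        simp [hb, add_assoc]
      · simp only [step, hj, if_false]
        exact (not_not.mp hj).symm
    have hres := congrFun ((H b b' h0 hsub).mp hstep) 0
    simp only [step, h0, if_true] at hres
    have hb0 : b 0 = c i := by simp [hb]
    rw [hb0] at hres
    rw [hres]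
    congr 1
    funext n
    show b' (0 + n.1) = c' (i + n.1)
    have hnS : (n : Cell d) ∈ S := Or.inr (Finset.mem_coe.mpr n.2)
    simp [hb', zero_add, hnS]

lemma local_stepB {d : ℕ} {Q : Type*} (N : Finset (Cell d)) (δ γ : (↥N → Q) → Q)
    (H : ∀ c c' : Cell d → Q,
        (0 : Cell d) ∈ diffSet c c' → diffSet c c' ⊆ {0} ∪ (↑N : Set (Cell d)) →
        (c' = step N δ (diffSet c c') c ↔ c = step N γ (diffSet c c') c'))
    (c c' : Cell d → Q) (h : c = step N γ (diffSet c c') c') :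
    c' = step N δ (diffSet c c') c := by
  funext i
  by_cases hi : i ∈ diffSet c c'
  swap
  · simp only [step, hi, if_false]
    exact (not_not.mp hi).symm
  · simp only [step, hi, if_true]
    set S : Set (Cell d) := {0} ∪ (↑N : Set (Cell d)) with hS
    set b : Cell d → Q := fun j => if j ∈ S then c (i + j) else c' (i + j) with hb
    set b' : Cell d → Q := fun j => c' (i + j) with hb'
    have hdiff : ∀ j, j ∈ diffSet b b' ↔ (j ∈ S ∧ c (i + j) ≠ c' (i + j)) := by
      intro j
      by_cases hj : j ∈ S <;> simp [diffSet, hb, hb', hj]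
    have h0 : (0 : Cell d) ∈ diffSet b b' := by
      rw [hdiff]
      exact ⟨Or.inl rfl, by simpa [diffSet] using hi⟩
    have hsub : diffSet b b' ⊆ S := fun j hj => ((hdiff j).mp hj).1
    have hmem : ∀ j ∈ diffSet b b', i + j ∈ diffSet c c' := fun j hj => ((hdiff j).mp hj).2
    have hstep : b = step N γ (diffSet b b') b' := by
      funext j
      by_cases hj : j ∈ diffSet b b'
      · simp only [step, hj, if_true]
        have h1 : b j = c (i + j) := by simp [hb, hsub hj]
        rw [h1]
        have h2 := congrFun h (i + j)
        simp only [step, hmem j hj, if_true] at h2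
        rw [h2]
        congr 1
        funext n
        simp [hb', add_assoc]
      · simp only [step, hj, if_false]
        exact not_not.mp hj
    have hres := congrFun ((H b b' h0 hsub).mpr hstep) 0
    simp only [step, h0, if_true] at hres
    have hb0 : b' 0 = c' i := by simp [hb']
    rw [hb0] at hres
    rw [hres]
    congr 1
    funext n
    show b (0 + n.1) = c (i + n.1)
    have hnS : (n : Cell d) ∈ S := Or.inr (Finset.mem_coe.mpr n.2)
    simp [hb, zero_add, hnS]

/-- Two purely asynchronous CAs with the same neighborhood are inverse to each
other iff the inversion condition holds for all pairs of configurations whose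
difference set contains `0` and is contained in `{0} ∪ N`. -/
theorem pure_inverse_restricted_characterization {d : ℕ} {Q : Type*} (hd : 0 < d)
    (N : Finset (Cell d)) (δ γ : (↥N → Q) → Q) :
    PureInverse N N δ γ ↔
      ∀ c c' : Cell d → Q,
        (0 : Cell d) ∈ diffSet c c' → diffSet c c' ⊆ {0} ∪ (↑N : Set (Cell d)) →
        (c' = step N δ (diffSet c c') c ↔ c = step N γ (diffSet c c') c') := by
  constructor
  · intro H c c' h0 hsub
    constructor
    · intro h
      obtain ⟨A, hA⟩ := (H c c').mp ⟨_, h⟩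
      have h2 := step_normalize N γ A c' c hA
      rwa [← diffSet_comm c c'] at h2
    · intro h
      obtain ⟨A, hA⟩ := (H c c').mpr ⟨_, h⟩
      exact step_normalize N δ A c c' hA
  · intro H c c'
    constructor
    · rintro ⟨A, hA⟩
      exact ⟨_, local_stepA N δ γ H c c' (step_normalize N δ A c c' hA)⟩
    · rintro ⟨A, hA⟩
      have h2 := step_normalize N γ A c' c hA
      rw [← diffSet_comm c c'] at h2
      exact ⟨_, local_stepB N δ γ H c c' h2⟩
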